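/- arXiv:1708.08009 — 4 statements merged into one kernel-verified Lean document; each statement's English description precedes it below -/
import Mathlib

section
/- Let p be a prime, α ≥ 1, and let K be a field of characteristic 0 equipped with a nonarchimedean absolute value |·| extending the p-adic absolute value on ℚ (normalized so that |p| = p^{-1}). Let d ≥ 1, n₁,…,n_d ≥ 1 be integers, let ζ₁,…,ζ_d, η ∈ K satisfy |ζ_i| = |η| = 1, and let f₁,…,f_d : ℕ → K be functions periodic of period p^α with |f_i(m)| ≤ 1 for all m. Set W = n₁+⋯+n_d and define the weighted multiple harmonic sum H(m) = m^{W} · η^{m} · Σ_{0<m₁<⋯<m_d<m} ∏_{i=1}^{d} f_i(m_i) ζ_i^{m_i} m_i^{-n_i} ∈ K. Then |H(p^α)| ≤ p^{-W}, i.e. the p-adic valuation of the prime weighted multiple harmonic sum H(p^α) is at least the weight W. -/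
open scoped Classical

private lemma na_sum {K : Type*} [NormedField K]
    (hna : ∀ x y : K, ‖x + y‖ ≤ max ‖x‖ ‖y‖) {ι : Type*} (s : Finset ι) (g : ι → K)
    (C : ℝ) (hC : 0 ≤ C) (h : ∀ x ∈ s, ‖g x‖ ≤ C) : ‖∑ x ∈ s, g x‖ ≤ C := by
  classical
  induction s using Finset.induction_on with
  | empty => simpa using hC
  | insert _ _ hx ih =>
    rw [Finset.sum_insert hx]
    exact (hna _ _).trans (max_le (h _ (Finset.mem_insert_self _ _))
      (ih fun x hxs => h x (Finset.mem_insert_of_mem hxs)))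

private lemma zpow_sum' {G₀ : Type*} [CommGroupWithZero G₀] (x : G₀) (hx : x ≠ 0)
    {ι : Type*} {s : Finset ι} {g : ι → ℤ} :
    x ^ (∑ i ∈ s, g i) = ∏ i ∈ s, x ^ g i := by
  classical
  induction s using Finset.induction_on with
  | empty => simp
  | insert _ _ hxs ih =>
    rw [Finset.sum_insert hxs, Finset.prod_insert hxs, zpow_add₀ hx, ih]

/-- The multiple harmonic sum `Σ_{a<m₁<⋯<m_d<b} ∏_i f_i(m_i) ζ_i^{m_i} m_i^{-n_i}`,
indexed by strictly increasing tuples in the open interval `(a, b)`. -/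
noncomputable def mhsSum (K : Type*) [Field K] {d : ℕ} (n : Fin d → ℕ) (ζ : Fin d → K)
    (f : Fin d → ℕ → K) (a b : ℕ) : K :=
  ∑ m ∈ Finset.filter (fun m : Fin d → ℕ => StrictMono m)
      (Fintype.piFinset fun _ => Finset.Ioo a b),
    ∏ i, f i (m i) * ζ i ^ (m i) * ((m i : K) ^ (n i))⁻¹

/-- Lemma of §3.2.2, first assertion: a prime weighted multiple harmonic sum
`H(p^α) = (p^α)^W η^{p^α} Σ_{0<m₁<⋯<m_d<p^α} ∏_i f_i(m_i) ζ_i^{m_i} m_i^{-n_i}`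
(with `|ζ_i| = |η| = 1` and `f_i` of period `p^α` with values of absolute value `≤ 1`)
has absolute value at most `p^{-W}` where `W = n₁ + ⋯ + n_d` is the weight. -/
theorem stmt_0 (p : ℕ) [hp : Fact p.Prime] (α : ℕ) (hα : 1 ≤ α)
    (K : Type*) [NormedField K] [CharZero K]
    (hna : ∀ x y : K, ‖x + y‖ ≤ max ‖x‖ ‖y‖)
    (hext : ∀ q : ℚ, ‖(q : K)‖ = ‖(q : ℚ_[p])‖)
    (d : ℕ) (hd : 1 ≤ d) (n : Fin d → ℕ) (hn : ∀ i, 1 ≤ n i)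
    (ζ : Fin d → K) (hζ : ∀ i, ‖ζ i‖ = 1) (η : K) (hη : ‖η‖ = 1)
    (f : Fin d → ℕ → K) (hper : ∀ i m, f i (m + p ^ α) = f i m)
    (hf : ∀ i m, ‖f i m‖ ≤ 1) :
    ‖((p ^ α : ℕ) : K) ^ (∑ i, n i) * η ^ (p ^ α) * mhsSum K n ζ f 0 (p ^ α)‖
      ≤ ((p : ℝ) ^ (∑ i, n i))⁻¹ := by
  classical
  set W := ∑ i, n i with hW
  have hp1 : (1 : ℝ) < p := by exact_mod_cast hp.out.one_lt
  have hP0 : (0 : ℝ) < p := lt_trans zero_lt_one hp1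
  set P : ℝ := (p : ℝ) with hPdef
  -- norm of `p^α` in `K`
  have hpa : ‖((p ^ α : ℕ) : K)‖ = P ^ (-(α : ℤ)) := by
    have h1 : ((p ^ α : ℕ) : K) = (((p ^ α : ℕ) : ℚ) : K) := by norm_cast
    rw [h1, hext]
    have h2 : (((p ^ α : ℕ) : ℚ) : ℚ_[p]) = (p : ℚ_[p]) ^ α := by push_cast; ring
    rw [h2, norm_pow, Padic.norm_p, inv_pow, ← zpow_natCast, ← zpow_neg]
  -- lower bound for norms of `0 < m < p^α`
  have hmlow : ∀ m : ℕ, 0 < m → m < p ^ α → P ^ (-((α : ℤ) - 1)) ≤ ‖(m : K)‖ := by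
    intro m h0 h1
    have hv : padicValNat p m < α := by
      by_contra hc
      push_neg at hc
      have : p ^ α ∣ m := dvd_trans (pow_dvd_pow p hc) pow_padicValNat_dvd
      exact absurd (Nat.le_of_dvd h0 this) (not_le.mpr h1)
    have h2 : ((m : ℕ) : K) = (((m : ℕ) : ℚ) : K) := by norm_cast
    rw [h2, hext, Rat.cast_natCast,
      Padic.norm_eq_zpow_neg_valuation (by exact_mod_cast h0.ne' : ((m : ℚ_[p]) ≠ 0)),
      Padic.valuation_natCast]
    apply zpow_le_zpow_right₀ hp1.le
    omega
  -- per-term bound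
  have hterm : ∀ m ∈ Finset.filter (fun m : Fin d → ℕ => StrictMono m)
      (Fintype.piFinset fun _ => Finset.Ioo 0 (p ^ α)),
      ‖∏ i, f i (m i) * ζ i ^ (m i) * ((m i : K) ^ (n i))⁻¹‖
        ≤ P ^ (((α : ℤ) - 1) * W) := by
    intro m hm
    rw [Finset.mem_filter] at hm
    have hmem := Fintype.mem_piFinset.mp hm.1
    rw [norm_prod]
    have hsum : P ^ (((α : ℤ) - 1) * W) = ∏ i : Fin d, P ^ (((α : ℤ) - 1) * n i) := by
      rw [← zpow_sum' P (ne_of_gt hP0)]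
      congr 1
      rw [hW]
      push_cast
      rw [Finset.mul_sum]
    rw [hsum]
    apply Finset.prod_le_prod (fun i _ => norm_nonneg _)
    intro i _
    have hio := Finset.mem_Ioo.mp (hmem i)
    have hlow := hmlow (m i) hio.1 hio.2
    have hpos : (0 : ℝ) < P ^ (-((α : ℤ) - 1)) := zpow_pos hP0 _
    have hmpos : (0 : ℝ) < ‖((m i : ℕ) : K)‖ := lt_of_lt_of_le hpos hlow
    have hinv : ‖(((m i : ℕ) : K) ^ (n i))⁻¹‖ ≤ P ^ (((α : ℤ) - 1) * n i) := by
      rw [norm_inv, norm_pow]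
      have h3 : (P ^ (-((α : ℤ) - 1))) ^ (n i) ≤ ‖((m i : ℕ) : K)‖ ^ (n i) :=
        pow_le_pow_left₀ hpos.le hlow _
      have h4 : (‖((m i : ℕ) : K)‖ ^ (n i))⁻¹ ≤ ((P ^ (-((α : ℤ) - 1))) ^ (n i))⁻¹ :=
        inv_anti₀ (pow_pos hpos _) h3
      refine h4.trans_eq ?_
      rw [← zpow_natCast (P ^ (-((α : ℤ) - 1))) (n i), ← zpow_mul, ← zpow_neg]
      congr 1
      ring
    calc ‖f i (m i) * ζ i ^ (m i) * (((m i : ℕ) : K) ^ (n i))⁻¹‖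
        = ‖f i (m i)‖ * ‖ζ i‖ ^ (m i) * ‖(((m i : ℕ) : K) ^ (n i))⁻¹‖ := by
          rw [norm_mul, norm_mul, norm_pow]
      _ ≤ 1 * 1 ^ (m i) * (P ^ (((α : ℤ) - 1) * n i)) := by
          apply mul_le_mul
          · exact mul_le_mul (hf i (m i)) (by rw [hζ i]) (by positivity) zero_le_one
          · exact hinv
          · exact norm_nonneg _
          · norm_num
      _ = P ^ (((α : ℤ) - 1) * n i) := by ring
  -- bound the sum
  have hS : ‖mhsSum K n ζ f 0 (p ^ α)‖ ≤ P ^ (((α : ℤ) - 1) * W) :=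
    na_sum hna _ _ _ (zpow_pos hP0 _).le hterm
  rw [norm_mul, norm_mul, norm_pow, norm_pow, hpa, hη, one_pow, mul_one]
  calc (P ^ (-(α : ℤ))) ^ W * ‖mhsSum K n ζ f 0 (p ^ α)‖
      ≤ (P ^ (-(α : ℤ))) ^ W * P ^ (((α : ℤ) - 1) * W) :=
        mul_le_mul_of_nonneg_left hS (pow_nonneg (zpow_pos hP0 _).le _)
    _ = (P ^ W)⁻¹ := by
        rw [← zpow_natCast (P ^ (-(α : ℤ))) W, ← zpow_mul,
          ← zpow_add₀ (ne_of_gt hP0), ← zpow_natCast P W, ← zpow_neg]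
        congr 1
        ring
end

section
/- Let p be a prime, α ≥ 1, and let K be a field of characteristic 0 equipped with a nonarchimedean absolute value |·| extending the p-adic absolute value on ℚ (normalized so that |p| = p^{-1}). Let d ≥ 1, n₁,…,n_d ≥ 1 be integers, let ζ₁,…,ζ_d, η ∈ K satisfy |ζ_i| = |η| = 1, and let f₁,…,f_d : ℕ → K be functions periodic of period p^α with |f_i(m)| ≤ 1 for all m. Set W = n₁+⋯+n_d and H(p^α) = p^{αW} · η^{p^α} · Σ_{0<m₁<⋯<m_d<p^α} ∏_{i=1}^{d} f_i(m_i) ζ_i^{m_i} m_i^{-n_i}. Define the modified data f'_i(m) = f_i(p^{α-1} m), ζ'_i = ζ_i^{p^{α-1}}, η' = η^{p^{α-1}}, and set H'(p) = p^{W} · (η')^{p} · Σ_{0<m₁<⋯<m_d<p} ∏_{i=1}^{d} f'_i(m_i) (ζ'_i)^{m_i} m_i^{-n_i}. Then |H(p^α) − H'(p)| ≤ p^{-(W+1)}; equivalently, p^{-W} H(p^α) and p^{-W} H'(p) are congruent modulo p in the valuation ring of K. -/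
open scoped Classical

/-- Lemma of §3.2.2, congruence assertion: the prime weighted multiple harmonic sum
`H(p^α)` is congruent modulo `p^{W+1}` to the prime weighted multiple harmonic sum
`H'(p)` attached to the modified data `f'_i(m) = f_i(p^{α-1} m)`, `ζ'_i = ζ_i^{p^{α-1}}`,
`η' = η^{p^{α-1}}`; i.e. `|H(p^α) − H'(p)| ≤ p^{-(W+1)}` where `W = n₁ + ⋯ + n_d`. -/
theorem stmt_1 (p : ℕ) [hp : Fact p.Prime] (α : ℕ) (hα : 1 ≤ α)
    (K : Type*) [NormedField K] [CharZero K]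
    (hna : ∀ x y : K, ‖x + y‖ ≤ max ‖x‖ ‖y‖)
    (hext : ∀ q : ℚ, ‖(q : K)‖ = ‖(q : ℚ_[p])‖)
    (d : ℕ) (hd : 1 ≤ d) (n : Fin d → ℕ) (hn : ∀ i, 1 ≤ n i)
    (ζ : Fin d → K) (hζ : ∀ i, ‖ζ i‖ = 1) (η : K) (hη : ‖η‖ = 1)
    (f : Fin d → ℕ → K) (hper : ∀ i m, f i (m + p ^ α) = f i m)
    (hf : ∀ i m, ‖f i m‖ ≤ 1) :
    ‖((p ^ α : ℕ) : K) ^ (∑ i, n i) * η ^ (p ^ α) * mhsSum K n ζ f 0 (p ^ α)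
        - ((p : ℕ) : K) ^ (∑ i, n i) * (η ^ (p ^ (α - 1))) ^ p *
            mhsSum K n (fun i => ζ i ^ (p ^ (α - 1))) (fun i m => f i (p ^ (α - 1) * m)) 0 p‖
      ≤ ((p : ℝ) ^ (∑ i, n i + 1))⁻¹ := by
  haveI : IsUltrametricDist K :=
    IsUltrametricDist.isUltrametricDist_of_forall_norm_add_le_max_norm hna
  set W := ∑ i, n i with hW
  set q := p ^ (α - 1) with hq
  have hp1 : 1 < p := hp.out.one_lt
  have hpR : (1:ℝ) < p := by exact_mod_cast hp1
  have hpR0 : (0:ℝ) < p := lt_trans one_pos hpR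
  have hq0 : 0 < q := Nat.pow_pos hp.out.pos
  have hqp : q * p = p ^ α := by
    rw [hq, ← pow_succ]
    congr 1
    omega
  -- norm of natural number casts
  have hnormNat : ∀ m : ℕ, m ≠ 0 →
      ‖(m : K)‖ = (p:ℝ) ^ (-(padicValNat p m : ℤ)) := by
    intro m hm
    have h1 : ((m : ℚ) : K) = (m : K) := by push_cast; ring
    have h2 : ((m : ℚ) : ℚ_[p]) = (m : ℚ_[p]) := by push_cast; ring
    have := hext (m : ℚ)
    rw [h1, h2] at this
    rw [this, Padic.norm_eq_zpow_neg_valuation (by exact_mod_cast hm), Padic.valuation_natCast]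
  -- the η powers agree
  have hη2 : (η ^ q) ^ p = η ^ (p ^ α) := by rw [← pow_mul, hqp]
  -- abbreviations
  set S := Finset.filter (fun m : Fin d → ℕ => StrictMono m)
      (Fintype.piFinset fun _ : Fin d => Finset.Ioo 0 (p ^ α)) with hS
  set T := Finset.filter (fun m : Fin d → ℕ => StrictMono m)
      (Fintype.piFinset fun _ : Fin d => Finset.Ioo 0 p) with hT
  set term : (Fin d → ℕ) → K := fun m => ∏ i, f i (m i) * ζ i ^ (m i) * ((m i : K) ^ (n i))⁻¹
    with hterm
  set term' : (Fin d → ℕ) → K := fun m =>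
      ∏ i, f i (q * m i) * (ζ i ^ q) ^ (m i) * ((m i : K) ^ (n i))⁻¹ with hterm'
  have hmhs1 : mhsSum K n ζ f 0 (p ^ α) = ∑ m ∈ S, term m := rfl
  have hmhs2 : mhsSum K n (fun i => ζ i ^ q) (fun i m => f i (q * m)) 0 p
      = ∑ m ∈ T, term' m := rfl
  -- split S by divisibility
  have hsplit := Finset.sum_filter_add_sum_filter_not S (fun m => ∀ i, q ∣ m i) term
  set S₁ := Finset.filter (fun m => ∀ i, q ∣ m i) S with hS₁
  set S₂ := Finset.filter (fun m => ¬ ∀ i, q ∣ m i) S with hS₂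
  -- bijection between S₁ and T
  have hbij : ∑ m ∈ S₁, term m = ∑ m ∈ T, term (fun j => q * m j) := by
    refine Finset.sum_nbij' (fun m j => m j / q) (fun m j => q * m j) ?_ ?_ ?_ ?_ ?_
    · intro m hm
      rw [hS₁, Finset.mem_filter, hS, Finset.mem_filter, Fintype.mem_piFinset] at hm
      obtain ⟨⟨hmem, hmono⟩, hdvd⟩ := hm
      rw [hT, Finset.mem_filter, Fintype.mem_piFinset]
      refine ⟨fun i => ?_, ?_⟩
      · have h := hmem i
        rw [Finset.mem_Ioo] at h ⊢
        constructor
        · exact Nat.div_pos (Nat.le_of_dvd h.1 (hdvd i)) hq0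
        · rw [Nat.div_lt_iff_lt_mul hq0]
          calc m i < p ^ α := h.2
          _ = p * q := by rw [mul_comm]; exact hqp.symm
      · intro a b hab
        exact Nat.div_lt_div_of_lt_of_dvd (hdvd b) (hmono hab)
    · intro m hm
      rw [hT, Finset.mem_filter, Fintype.mem_piFinset] at hm
      obtain ⟨hmem, hmono⟩ := hm
      rw [hS₁, Finset.mem_filter, hS, Finset.mem_filter, Fintype.mem_piFinset]
      refine ⟨⟨fun i => ?_, ?_⟩, fun i => dvd_mul_right _ _⟩
      · have h := hmem i
        rw [Finset.mem_Ioo] at h ⊢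
        exact ⟨Nat.mul_pos hq0 h.1, by rw [← hqp]; exact (Nat.mul_lt_mul_left hq0).mpr h.2⟩
      · intro a b hab
        exact (Nat.mul_lt_mul_left hq0).mpr (hmono hab)
    · intro m hm
      rw [hS₁, Finset.mem_filter] at hm
      funext j
      exact Nat.mul_div_cancel' (hm.2 j)
    · intro m hm
      funext j
      exact Nat.mul_div_cancel_left _ hq0
    · intro m hm
      rw [hS₁, Finset.mem_filter] at hm
      congr 1
      funext j
      rw [Nat.mul_div_cancel' (hm.2 j)]
  -- pointwise identity on T
  have hqK : ((q : ℕ) : K) ≠ 0 := Nat.cast_ne_zero.mpr hq0.ne'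
  have hpoint : ∀ m : Fin d → ℕ, term (fun j => q * m j) = (((q : ℕ) : K) ^ W)⁻¹ * term' m := by
    intro m
    rw [hterm, hterm']
    simp only []
    rw [← Finset.prod_pow_eq_pow_sum Finset.univ n ((q : ℕ) : K), ← Finset.prod_inv_distrib,
      ← Finset.prod_mul_distrib]
    refine Finset.prod_congr rfl fun i _ => ?_
    rw [Nat.cast_mul, mul_pow, mul_inv, pow_mul]
    ring
  -- claim 1: the divisible part matches
  have hclaim1 : ((p ^ α : ℕ) : K) ^ W * ∑ m ∈ S₁, term m
      = ((p : ℕ) : K) ^ W * ∑ m ∈ T, term' m := by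
    rw [hbij]
    rw [Finset.sum_congr rfl fun m _ => hpoint m]
    rw [← Finset.mul_sum, ← mul_assoc]
    congr 1
    rw [← hqp, Nat.cast_mul, mul_pow]
    field_simp
  -- claim 2: bound on each term of S₂
  have hclaim2 : ∀ m ∈ S₂, ‖((p ^ α : ℕ) : K) ^ W * term m‖ ≤ (p:ℝ) ^ (-(W + 1 : ℤ)) := by
    intro m hm
    rw [hS₂, Finset.mem_filter, hS, Finset.mem_filter, Fintype.mem_piFinset] at hm
    obtain ⟨⟨hmem, hmono⟩, hndvd⟩ := hm
    push_neg at hndvd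
    obtain ⟨j, hj⟩ := hndvd
    have hmpos : ∀ i, 0 < m i := fun i => (Finset.mem_Ioo.mp (hmem i)).1
    have hmlt : ∀ i, m i < p ^ α := fun i => (Finset.mem_Ioo.mp (hmem i)).2
    set v : Fin d → ℕ := fun i => padicValNat p (m i) with hv
    -- v i ≤ α - 1
    have hvle : ∀ i, v i ≤ α - 1 := by
      intro i
      by_contra h
      push_neg at h
      have : α ≤ v i := by omega
      have hdvd : p ^ α ∣ m i := dvd_trans (pow_dvd_pow p this) pow_padicValNat_dvd
      have h1 := Nat.le_of_dvd (hmpos i) hdvd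
      have h2 := hmlt i
      omega
    -- v j + 1 ≤ α - 1
    have hvj : v j + 1 ≤ α - 1 := by
      by_contra h
      push_neg at h
      have : α - 1 ≤ v j := by omega
      exact hj (dvd_trans (pow_dvd_pow p this) pow_padicValNat_dvd)
    -- key exponent inequality
    have hkey : ∑ i, v i * n i + 1 ≤ (α - 1) * W := by
      have h1 : ∑ i, v i * n i + 1
          ≤ ∑ i ∈ Finset.univ.erase j, v i * n i + (v j + 1) * n j := by
        rw [← Finset.sum_erase_add Finset.univ (fun i => v i * n i) (Finset.mem_univ j)]
        have h0 := hn j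
        have h1 : (v j + 1) * n j = v j * n j + n j := by ring
        omega
      have h2 : ∑ i ∈ Finset.univ.erase j, v i * n i + (v j + 1) * n j
          ≤ ∑ i ∈ Finset.univ.erase j, (α - 1) * n i + (α - 1) * n j := by
        gcongr with i hi
        exact hvle i
      have h3 : ∑ i ∈ Finset.univ.erase j, (α - 1) * n i + (α - 1) * n j = (α - 1) * W := by
        rw [Finset.sum_erase_add Finset.univ _ (Finset.mem_univ j), hW, Finset.mul_sum]
      omega
    -- norm of each factor
    have hfac : ∀ i, ‖f i (m i) * ζ i ^ (m i) * ((m i : K) ^ (n i))⁻¹‖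
        ≤ (p:ℝ) ^ (v i * n i) := by
      intro i
      rw [norm_mul, norm_mul, norm_pow, hζ i, one_pow, norm_inv, norm_pow,
        hnormNat (m i) (hmpos i).ne']
      have : (((p:ℝ) ^ (-(padicValNat p (m i) : ℤ))) ^ (n i))⁻¹ = (p:ℝ) ^ (v i * n i) := by
        rw [← zpow_natCast ((p:ℝ) ^ (-(padicValNat p (m i) : ℤ))), ← zpow_mul, ← zpow_neg]
        rw [← zpow_natCast (p:ℝ) (v i * n i)]
        congr 1
        push_cast [hv]
        ring
      rw [this]
      calc ‖f i (m i)‖ * 1 * (p:ℝ) ^ (v i * n i) ≤ 1 * 1 * (p:ℝ) ^ (v i * n i) := by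
            gcongr; exact hf i (m i)
        _ = (p:ℝ) ^ (v i * n i) := by ring
    -- norm of term
    have hterm_le : ‖term m‖ ≤ (p:ℝ) ^ (∑ i, v i * n i) := by
      rw [hterm]
      simp only []
      calc ‖∏ i, f i (m i) * ζ i ^ (m i) * ((m i : K) ^ (n i))⁻¹‖
          = ∏ i, ‖f i (m i) * ζ i ^ (m i) * ((m i : K) ^ (n i))⁻¹‖ := by
            rw [norm_prod]
        _ ≤ ∏ i, (p:ℝ) ^ (v i * n i) := by
            refine Finset.prod_le_prod (fun i _ => norm_nonneg _) (fun i _ => hfac i)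
        _ = (p:ℝ) ^ (∑ i, v i * n i) := Finset.prod_pow_eq_pow_sum _ _ _
    -- norm of the power prefactor
    have hpref : ‖((p ^ α : ℕ) : K) ^ W‖ = (p:ℝ) ^ (-(α * W : ℤ)) := by
      rw [norm_pow, hnormNat (p ^ α) (pow_ne_zero _ hp.out.pos.ne')]
      rw [padicValNat.prime_pow]
      rw [← zpow_natCast ((p:ℝ) ^ (-(α:ℤ))), ← zpow_mul]
      congr 1
      push_cast
      ring
    rw [norm_mul, hpref]
    calc (p:ℝ) ^ (-(α * W : ℤ)) * ‖term m‖
        ≤ (p:ℝ) ^ (-(α * W : ℤ)) * (p:ℝ) ^ (∑ i, v i * n i) := by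
          gcongr
      _ = (p:ℝ) ^ (-(α * W : ℤ) + ((∑ i, v i * n i : ℕ) : ℤ)) := by
          rw [← zpow_natCast (p:ℝ) (∑ i, v i * n i), ← zpow_add₀ hpR0.ne']
      _ ≤ (p:ℝ) ^ (-(W + 1 : ℤ)) := by
          apply zpow_le_zpow_right₀ hpR.le
          have h2 : ∑ i, v i * n i + 1 + W ≤ α * W := by
            rw [Nat.sub_one_mul] at hkey
            omega
          have h3 : ((∑ i, v i * n i + 1 + W : ℕ) : ℤ) ≤ ((α * W : ℕ) : ℤ) :=
            Int.ofNat_le.mpr h2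
          push_cast at h3 ⊢
          linarith
  -- assemble
  have hdiff : ((p ^ α : ℕ) : K) ^ W * η ^ (p ^ α) * mhsSum K n ζ f 0 (p ^ α)
        - ((p : ℕ) : K) ^ W * (η ^ q) ^ p *
            mhsSum K n (fun i => ζ i ^ q) (fun i m => f i (q * m)) 0 p
      = η ^ (p ^ α) * ∑ m ∈ S₂, ((p ^ α : ℕ) : K) ^ W * term m := by
    rw [hη2, hmhs1, hmhs2, ← hsplit, ← Finset.mul_sum]
    linear_combination η ^ p ^ α * hclaim1
  rw [hdiff, norm_mul, norm_pow, hη, one_pow, one_mul]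
  have hbound : ‖∑ m ∈ S₂, ((p ^ α : ℕ) : K) ^ W * term m‖ ≤ (p:ℝ) ^ (-(W + 1 : ℤ)) :=
    IsUltrametricDist.norm_sum_le_of_forall_le_of_nonneg (zpow_nonneg hpR0.le _) hclaim2
  calc ‖∑ m ∈ S₂, ((p ^ α : ℕ) : K) ^ W * term m‖ ≤ (p:ℝ) ^ (-(W + 1 : ℤ)) := hbound
    _ = ((p : ℝ) ^ (W + 1))⁻¹ := by
        rw [zpow_neg, ← zpow_natCast (p:ℝ) (W + 1)]
        push_cast
        ring_nf
end

section
/- Let p be a prime, α ≥ 1, and let K be a field of characteristic 0, complete with respect to a nonarchimedean absolute value |·| extending the p-adic absolute value on ℚ (normalized so that |p| = p^{-1}). Let d ≥ 1, n₁,…,n_d ≥ 1 be integers, let ζ₁,…,ζ_d ∈ K satisfy |ζ_i| = 1, and let f₁,…,f_d : ℕ → K be functions periodic of period p^α with |f_i(m)| ≤ 1 for all m. Let u ≥ 1 and set δ = u·p^α. Then the family indexed by (l₁,…,l_d) ∈ ℕ^d whose (l₁,…,l_d)-term is (∏_{i=1}^{d} (−1)^{l_i} binom(n_i+l_i−1,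 l_i) δ^{l_i} ζ_i^{δ}) · Σ_{0<m₁<⋯<m_d<p^α} ∏_{i=1}^{d} f_i(m_i) ζ_i^{m_i} m_i^{-(n_i+l_i)} is summable in K, and its sum equals the shifted multiple harmonic sum Σ_{δ<m₁<⋯<m_d<δ+p^α} ∏_{i=1}^{d} f_i(m_i) ζ_i^{m_i} m_i^{-n_i}. -/
open scoped Classical

set_option maxHeartbeats 4000000

/-- Product over a pi type of individually (norm-)summable families. -/
lemma aux_hasSum_pi_prod {K : Type*} [NormedField K] [CompleteSpace K] :
    ∀ {d : ℕ} (g : Fin d → ℕ → K) (S : Fin d → K), (∀ i, HasSum (g i) (S i)) →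
    (∀ i, Summable fun l => ‖g i l‖) →
    HasSum (fun l : Fin d → ℕ => ∏ i, g i (l i)) (∏ i, S i) ∧
      Summable (fun l : Fin d → ℕ => ‖∏ i, g i (l i)‖) := by
  intro d
  induction d with
  | zero =>
      intro g S _ _
      constructor
      · have h := hasSum_single (f := fun l : Fin 0 → ℕ => ∏ i, g i (l i))
          (fun _ => 0) (fun b' hb' => absurd (Subsingleton.elim _ _) hb')
        simpa using h
      · exact Summable.of_finite
  | succ d ih =>
      intro g S hg hgs
      obtain ⟨ih1, ih2⟩ := ih (fun i => g i.succ) (fun i => S i.succ)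
        (fun i => hg i.succ) (fun i => hgs i.succ)
      have hsum : Summable (fun z : ℕ × (Fin d → ℕ) =>
          g 0 z.1 * ∏ i : Fin d, g i.succ (z.2 i)) := by
        have h := summable_mul_of_summable_norm (hgs 0) ih2
        exact h
      have hmul : HasSum (fun z : ℕ × (Fin d → ℕ) =>
          g 0 z.1 * ∏ i : Fin d, g i.succ (z.2 i)) (S 0 * ∏ i : Fin d, S i.succ) := by
        have h := (hg 0).mul ih1 hsum
        exact h
      let e : (ℕ × (Fin d → ℕ)) ≃ (Fin (d + 1) → ℕ) :=
        Fin.consEquiv (fun _ => ℕ)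
      have hcomp : ∀ z : ℕ × (Fin d → ℕ),
          (fun l : Fin (d + 1) → ℕ => ∏ i, g i (l i)) (e z)
            = g 0 z.1 * ∏ i : Fin d, g i.succ (z.2 i) := by
        intro z
        simp [e, Fin.consEquiv, Fin.prod_univ_succ]
      constructor
      · rw [← Equiv.hasSum_iff e]
        have : ((fun l : Fin (d + 1) → ℕ => ∏ i, g i (l i)) ∘ e)
            = fun z : ℕ × (Fin d → ℕ) => g 0 z.1 * ∏ i : Fin d, g i.succ (z.2 i) :=
          funext hcomp
        rw [this, Fin.prod_univ_succ]
        exact hmul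
      · rw [← Equiv.summable_iff e]
        have : ((fun l : Fin (d + 1) → ℕ => ‖∏ i, g i (l i)‖) ∘ e)
            = fun z : ℕ × (Fin d → ℕ) => ‖g 0 z.1‖ * ‖∏ i : Fin d, g i.succ (z.2 i)‖ := by
          funext z
          simp only [Function.comp_apply, hcomp z, norm_mul]
        rw [this]
        have h := Summable.mul_of_nonneg (hgs 0) ih2 (fun _ => norm_nonneg _)
          (fun _ => norm_nonneg _)
        exact h

/-- The binomial series for `((δ + m) ^ n)⁻¹`, together with norm-summability. -/
lemma aux_key1 {K : Type*} [NormedField K] [CompleteSpace K] [CharZero K]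
    (hb : ∀ k : ℕ, ‖(k : K)‖ ≤ 1)
    (δ m n : ℕ) (hn : 1 ≤ n) (hm : 0 < m) (hnorm : ‖(δ : K)‖ < ‖(m : K)‖) :
    HasSum (fun l : ℕ => (-1 : K) ^ l * ((n + l - 1).choose l : K) * (δ : K) ^ l *
        ((m : K) ^ (n + l))⁻¹) (((δ + m : ℕ) : K) ^ n)⁻¹ ∧
    Summable (fun l : ℕ => ‖(-1 : K) ^ l * ((n + l - 1).choose l : K) * (δ : K) ^ l *
        ((m : K) ^ (n + l))⁻¹‖) := by
  have hmK : (m : K) ≠ 0 := Nat.cast_ne_zero.mpr hm.ne'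
  have hmpos : 0 < ‖(m : K)‖ := norm_pos_iff.2 hmK
  set r : K := -((δ : K) / m) with hr
  have hrn : ‖r‖ < 1 := by
    rw [hr, norm_neg, norm_div]
    exact (div_lt_one hmpos).2 hnorm
  have hδmK : ((δ : K) + m) ≠ 0 := by
    have h0 : ((δ + m : ℕ) : K) ≠ 0 := Nat.cast_ne_zero.mpr (by omega)
    push_cast at h0
    exact h0
  constructor
  · have h := hasSum_choose_mul_geometric_of_norm_lt_one (𝕜 := K) (n - 1) hrn
    have h2 := h.mul_right ((m : K) ^ n)⁻¹
    have hval : 1 / (1 - r) ^ (n - 1 + 1) * ((m : K) ^ n)⁻¹ = (((δ + m : ℕ) : K) ^ n)⁻¹ := by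
      rw [show n - 1 + 1 = n from by omega]
      have h1r : 1 - r = ((δ : K) + m) / m := by
        rw [hr]
        field_simp
        ring
      rw [h1r]
      push_cast
      rw [div_pow]
      field_simp
    rw [hval] at h2
    have hfun : (fun l : ℕ => (((l + (n - 1)).choose (n - 1) : ℕ) : K) * r ^ l *
        ((m : K) ^ n)⁻¹)
        = fun l : ℕ => (-1 : K) ^ l * ((n + l - 1).choose l : K) * (δ : K) ^ l *
          ((m : K) ^ (n + l))⁻¹ := by
      funext l
      have hc : (n + l - 1).choose l = (l + (n - 1)).choose (n - 1) := by
        rw [show n + l - 1 = l + (n - 1) by omega]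
        rw [← Nat.choose_symm (Nat.le_add_right l (n - 1)), Nat.add_sub_cancel_left]
      rw [hc, hr, pow_add, neg_pow, div_pow]
      field_simp
    rw [hfun] at h2
    exact h2
  · have hrn' : ‖(δ : K)‖ / ‖(m : K)‖ < 1 := (div_lt_one hmpos).2 hnorm
    have hgeo : Summable (fun l : ℕ => (‖(m : K)‖ ^ n)⁻¹ * (‖(δ : K)‖ / ‖(m : K)‖) ^ l) :=
      (summable_geometric_of_lt_one (by positivity) hrn').mul_left _
    refine Summable.of_nonneg_of_le (fun l => norm_nonneg _) (fun l => ?_) hgeo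
    rw [norm_mul, norm_mul, norm_mul, norm_pow, norm_pow, norm_inv, norm_pow, norm_neg,
      norm_one, one_pow, one_mul]
    calc ‖((n + l - 1).choose l : K)‖ * ‖(δ : K)‖ ^ l * (‖(m : K)‖ ^ (n + l))⁻¹
        ≤ 1 * (‖(δ : K)‖ ^ l * (‖(m : K)‖ ^ (n + l))⁻¹) := by
          rw [mul_assoc]
          refine mul_le_mul_of_nonneg_right (hb _) (by positivity)
      _ = (‖(m : K)‖ ^ n)⁻¹ * (‖(δ : K)‖ / ‖(m : K)‖) ^ l := by
          rw [one_mul, pow_add, div_pow, mul_inv]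
          field_simp

/-- The `p`-adic formula of shifting of multiple harmonic sums (Lemma `shifting` of §6.1
with `m = p^α`, `δ = u p^α`): the family indexed by `(l₁,…,l_d) ∈ ℕ^d` with term
`(∏_i (−1)^{l_i} C(n_i+l_i−1, l_i) δ^{l_i} ζ_i^{δ}) · Σ_{0<m₁<⋯<m_d<p^α} ∏_i f_i(m_i) ζ_i^{m_i} m_i^{-(n_i+l_i)}`
is summable, with sum the shifted sum `Σ_{δ<m₁<⋯<m_d<δ+p^α} ∏_i f_i(m_i) ζ_i^{m_i} m_i^{-n_i}`. -/
theorem stmt_8 (p : ℕ) [hp : Fact p.Prime] (α : ℕ) (hα : 1 ≤ α)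
    (K : Type*) [NormedField K] [CompleteSpace K] [CharZero K]
    (hna : ∀ x y : K, ‖x + y‖ ≤ max ‖x‖ ‖y‖)
    (hext : ∀ q : ℚ, ‖(q : K)‖ = ‖(q : ℚ_[p])‖)
    (d : ℕ) (hd : 1 ≤ d) (n : Fin d → ℕ) (hn : ∀ i, 1 ≤ n i)
    (ζ : Fin d → K) (hζ : ∀ i, ‖ζ i‖ = 1)
    (f : Fin d → ℕ → K) (hper : ∀ i m, f i (m + p ^ α) = f i m)
    (hf : ∀ i m, ‖f i m‖ ≤ 1)
    (u : ℕ) (hu : 1 ≤ u) :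
    HasSum (fun l : Fin d → ℕ =>
        (∏ i, (-1 : K) ^ (l i) * ((n i + l i - 1).choose (l i) : K) *
            ((u * p ^ α : ℕ) : K) ^ (l i) * ζ i ^ (u * p ^ α)) *
          mhsSum K (fun i => n i + l i) ζ f 0 (p ^ α))
      (mhsSum K n ζ f (u * p ^ α) (u * p ^ α + p ^ α)) := by
  have hnatnorm : ∀ k : ℕ, ‖(k : K)‖ = ‖(k : ℚ_[p])‖ := by
    intro k
    have h := hext (k : ℚ)
    push_cast at h
    exact h
  have hb : ∀ k : ℕ, ‖(k : K)‖ ≤ 1 := by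
    intro k
    rw [hnatnorm]
    have h := Padic.norm_int_le_one (p := p) (k : ℤ)
    push_cast at h
    exact h
  set δ : ℕ := u * p ^ α with hδdef
  have hδnorm : ‖(δ : K)‖ ≤ (p : ℝ) ^ (-(α : ℤ)) := by
    rw [hnatnorm, hδdef]
    push_cast
    rw [norm_mul, norm_pow, Padic.norm_p]
    have h1 : ‖(u : ℚ_[p])‖ ≤ 1 := by
      have h := Padic.norm_int_le_one (p := p) (u : ℤ)
      push_cast at h
      exact h
    calc ‖(u : ℚ_[p])‖ * ((p : ℝ)⁻¹) ^ α ≤ 1 * ((p : ℝ)⁻¹) ^ α :=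
          mul_le_mul_of_nonneg_right h1 (by positivity)
      _ = (p : ℝ) ^ (-(α : ℤ)) := by
          rw [one_mul, inv_pow, ← zpow_natCast (p : ℝ), ← zpow_neg]
  have hmnorm : ∀ m : ℕ, 0 < m → m < p ^ α → (p : ℝ) ^ (-(α : ℤ)) < ‖(m : K)‖ := by
    intro m h0 h1
    rw [hnatnorm]
    by_contra hle
    push_neg at hle
    rw [show ((m : ℚ_[p])) = (((m : ℤ)) : ℚ_[p]) by push_cast; ring] at hle
    rw [Padic.norm_int_le_pow_iff_dvd] at hle
    have h2 : (p : ℤ) ^ α ≤ (m : ℤ) := Int.le_of_dvd (by exact_mod_cast h0) hle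
    have h3 : p ^ α ≤ m := by exact_mod_cast h2
    omega
  have hδlt : ∀ m : ℕ, 0 < m → m < p ^ α → ‖(δ : K)‖ < ‖(m : K)‖ :=
    fun m h0 h1 => lt_of_le_of_lt hδnorm (hmnorm m h0 h1)
  set T : Finset (Fin d → ℕ) := Finset.filter (fun m : Fin d → ℕ => StrictMono m)
      (Fintype.piFinset fun _ => Finset.Ioo 0 (p ^ α)) with hTdef
  have memT : ∀ m' : Fin d → ℕ, m' ∈ T ↔
      (∀ j, 0 < m' j ∧ m' j < p ^ α) ∧ StrictMono m' := by
    intro m'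
    rw [hTdef, Finset.mem_filter, Fintype.mem_piFinset]
    simp only [Finset.mem_Ioo]
  have hperu : ∀ (i : Fin d) (v m : ℕ), f i (m + v * p ^ α) = f i m := by
    intro i v
    induction v with
    | zero => intro m; simp
    | succ v ihv =>
        intro m
        have h : m + (v + 1) * p ^ α = m + v * p ^ α + p ^ α := by ring
        rw [h, hper, ihv]
  have hone : ∀ (i : Fin d) (m : ℕ), 0 < m → m < p ^ α →
      HasSum (fun lv : ℕ => ζ i ^ δ * (f i m * ζ i ^ m) *
          ((-1 : K) ^ lv * ((n i + lv - 1).choose lv : K) * (δ : K) ^ lv *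
            ((m : K) ^ (n i + lv))⁻¹))
        (ζ i ^ δ * (f i m * ζ i ^ m) * (((δ + m : ℕ) : K) ^ (n i))⁻¹) ∧
      Summable (fun lv : ℕ => ‖ζ i ^ δ * (f i m * ζ i ^ m) *
          ((-1 : K) ^ lv * ((n i + lv - 1).choose lv : K) * (δ : K) ^ lv *
            ((m : K) ^ (n i + lv))⁻¹)‖) := by
    intro i m h0 h1
    obtain ⟨hk, hks⟩ := aux_key1 hb δ m (n i) (hn i) h0 (hδlt m h0 h1)
    constructor
    · exact hk.mul_left _
    · have h := hks.mul_left ‖ζ i ^ δ * (f i m * ζ i ^ m)‖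
      exact h.congr fun lv => (norm_mul _ _).symm
  have Hsum : HasSum
      (fun l : Fin d → ℕ => ∑ m' ∈ T, ∏ i, ζ i ^ δ * (f i (m' i) * ζ i ^ (m' i)) *
          ((-1 : K) ^ (l i) * ((n i + l i - 1).choose (l i) : K) * (δ : K) ^ (l i) *
            ((m' i : K) ^ (n i + l i))⁻¹))
      (∑ m' ∈ T, ∏ i, ζ i ^ δ * (f i (m' i) * ζ i ^ (m' i)) *
          (((δ + m' i : ℕ) : K) ^ (n i))⁻¹) := by
    refine hasSum_sum ?_
    intro m' hm'
    rw [memT] at hm'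
    have h := (aux_hasSum_pi_prod
        (fun i lv => ζ i ^ δ * (f i (m' i) * ζ i ^ (m' i)) *
          ((-1 : K) ^ lv * ((n i + lv - 1).choose lv : K) * (δ : K) ^ lv *
            ((m' i : K) ^ (n i + lv))⁻¹))
        (fun i => ζ i ^ δ * (f i (m' i) * ζ i ^ (m' i)) *
          (((δ + m' i : ℕ) : K) ^ (n i))⁻¹)
        (fun i => (hone i (m' i) (hm'.1 i).1 (hm'.1 i).2).1)
        (fun i => (hone i (m' i) (hm'.1 i).1 (hm'.1 i).2).2)).1
    exact h
  have EL : ∀ l : Fin d → ℕ,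
      (∏ i, (-1 : K) ^ (l i) * ((n i + l i - 1).choose (l i) : K) *
          (δ : K) ^ (l i) * ζ i ^ δ) *
        mhsSum K (fun i => n i + l i) ζ f 0 (p ^ α)
      = ∑ m' ∈ T, ∏ i, ζ i ^ δ * (f i (m' i) * ζ i ^ (m' i)) *
          ((-1 : K) ^ (l i) * ((n i + l i - 1).choose (l i) : K) * (δ : K) ^ (l i) *
            ((m' i : K) ^ (n i + l i))⁻¹) := by
    intro l
    simp only [mhsSum]
    rw [← hTdef, Finset.mul_sum]
    refine Finset.sum_congr rfl fun m' _ => ?_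
    rw [← Finset.prod_mul_distrib]
    refine Finset.prod_congr rfl fun i _ => ?_
    ring
  have ER : (∑ m' ∈ T, ∏ i, ζ i ^ δ * (f i (m' i) * ζ i ^ (m' i)) *
        (((δ + m' i : ℕ) : K) ^ (n i))⁻¹)
      = mhsSum K n ζ f δ (δ + p ^ α) := by
    simp only [mhsSum]
    refine Finset.sum_nbij' (fun m' : Fin d → ℕ => fun j => m' j + δ)
        (fun m : Fin d → ℕ => fun j => m j - δ) ?_ ?_ ?_ ?_ ?_
    · intro a ha
      rw [memT] at ha
      rw [Finset.mem_filter, Fintype.mem_piFinset]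
      constructor
      · intro j
        rw [Finset.mem_Ioo]
        exact ⟨by have := (ha.1 j).1; omega, by have := (ha.1 j).2; omega⟩
      · intro x y hxy
        exact Nat.add_lt_add_right (ha.2 hxy) δ
    · intro a ha
      rw [Finset.mem_filter, Fintype.mem_piFinset] at ha
      rw [memT]
      refine ⟨fun j => ?_, fun x y hxy => ?_⟩
      · have h := ha.1 j
        rw [Finset.mem_Ioo] at h
        show 0 < a j - δ ∧ a j - δ < p ^ α
        omega
      · have h1 := ha.1 x
        rw [Finset.mem_Ioo] at h1
        have h2 := ha.2 hxy
        show a x - δ < a y - δ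
        omega
    · intro a ha
      funext j
      show a j + δ - δ = a j
      omega
    · intro a ha
      dsimp only at ha ⊢
      rw [Finset.mem_filter, Fintype.mem_piFinset] at ha
      funext j
      have h := ha.1 j
      rw [Finset.mem_Ioo] at h
      show a j - δ + δ = a j
      omega
    · intro a ha
      dsimp only
      refine Finset.prod_congr rfl fun i _ => ?_
      rw [show a i + δ = δ + a i from Nat.add_comm _ _]
      have hfa : f i (δ + a i) = f i (a i) := by
        rw [Nat.add_comm, hδdef]
        exact hperu i u (a i)
      rw [hfa, pow_add]
      ring
  have heq : (fun l : Fin d → ℕ =>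
      (∏ i, (-1 : K) ^ (l i) * ((n i + l i - 1).choose (l i) : K) *
          (δ : K) ^ (l i) * ζ i ^ δ) *
        mhsSum K (fun i => n i + l i) ζ f 0 (p ^ α))
      = fun l : Fin d → ℕ => ∑ m' ∈ T, ∏ i, ζ i ^ δ * (f i (m' i) * ζ i ^ (m' i)) *
          ((-1 : K) ^ (l i) * ((n i + l i - 1).choose (l i) : K) * (δ : K) ^ (l i) *
            ((m' i : K) ^ (n i + l i))⁻¹) := funext EL
  rw [heq, ← ER]
  exact Hsum
end

section
/- Let R be a commutative ring, let d ≥ 1, let g₁,…,g_d : ℕ → R, let m ≥ 1 and let 0 = t₀ < t₁ < ⋯ < t_r < t_{r+1} = m be integers. Consider the totally ordered set of 2r+1 labels I₀ < P₁ < I₁ < P₂ < ⋯ < P_r < I_r, where I_j stands for the open interval (t_j, t_{j+1}) and P_j stands for the point t_j. Then Σ_{0<m₁<⋯<m_d<m} ∏_{i=1}^{d} g_i(m_i) = Σ_{φ} ( ∏_{i : φ(i)=P_j for some j} g_i(t_j) ) · ∏_{j=0}^{r} ( Σ_{t_j<u₁<⋯<u_{k_j}<t_{j+1}} ∏_{s=1}^{k_j}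 g_{i_{j,s}}(u_s) ), where φ ranges over all weakly increasing maps {1,…,d} → {I₀,P₁,I₁,…,P_r,I_r} taking each value P_j at most once, k_j denotes the cardinality of φ^{-1}(I_j), and i_{j,1} < ⋯ < i_{j,k_j} are the elements of φ^{-1}(I_j) in increasing order. -/
open scoped Classical

/-- The iterated sum `Σ_{a<u_{i₁}<⋯<u_{i_k}<b} ∏_{i ∈ S} g_i(u_i)`, where
`i₁ < ⋯ < i_k` enumerate the index set `S ⊆ {1,…,d}` in increasing order: sum over
strictly increasing assignments `u : S → (a, b)` of the product `∏_{i ∈ S} g_i(u_i)`. -/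
noncomputable def splitSum {R : Type*} [CommRing R] {d : ℕ} (g : Fin d → ℕ → R)
    (S : Finset (Fin d)) (a b : ℕ) : R :=
  ∑ u ∈ Finset.filter (fun u : S → ℕ => StrictMono u)
      (Fintype.piFinset fun _ : S => Finset.Ioo a b),
    ∏ i : S, g i.1 (u i)

section Lab

/-- Label of a point `x` relative to the intermediate points `t 1 < ⋯ < t r`. -/
def lab (t : ℕ → ℕ) (r : ℕ) (x : ℕ) : ℕ :=
  ∑ j ∈ Finset.Icc 1 r, (if t j < x then 2 else if t j = x then 1 else 0)

lemma lab_le (t : ℕ → ℕ) (r : ℕ) (x : ℕ) : lab t r x ≤ 2 * r := by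
  have : lab t r x ≤ ∑ _j ∈ Finset.Icc 1 r, 2 := by
    apply Finset.sum_le_sum
    intro j _
    split_ifs <;> omega
  simpa [Nat.card_Icc, mul_comm] using this

lemma lab_mono (t : ℕ → ℕ) (r : ℕ) {x y : ℕ} (h : x ≤ y) : lab t r x ≤ lab t r y := by
  apply Finset.sum_le_sum
  intro j _
  split_ifs <;> omega

lemma aux1 (k : ℕ) : ∀ r, 1 ≤ k → k ≤ r →
    ∑ j ∈ Finset.Icc 1 r, (if j < k then 2 else if j = k then 1 else 0) = 2 * k - 1 := by
  intro r
  induction r with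
  | zero => omega
  | succ r ih =>
    intro h1 h2
    rw [Finset.sum_Icc_succ_top (by omega)]
    rcases Nat.lt_or_ge k (r+1) with h | h
    · rw [ih h1 (by omega)]
      have : ¬ (r+1 < k) := by omega
      have : ¬ (r+1 = k) := by omega
      simp only [if_neg ‹¬ (r+1 < k)›, if_neg ‹¬ (r+1 = k)›]
      omega
    · have hk : k = r + 1 := by omega
      subst hk
      have : ∑ j ∈ Finset.Icc 1 r, (if j < r+1 then 2 else if j = r+1 then 1 else 0)
          = ∑ _j ∈ Finset.Icc 1 r, 2 := by
        apply Finset.sum_congr rfl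
        intro j hj
        simp only [Finset.mem_Icc] at hj
        rw [if_pos (by omega)]
      rw [this]
      simp [Nat.card_Icc]
      omega

lemma aux2 (k : ℕ) : ∀ r, k ≤ r →
    ∑ j ∈ Finset.Icc 1 r, (if j ≤ k then 2 else 0) = 2 * k := by
  intro r
  induction r with
  | zero =>
    intro h
    interval_cases k
    simp
  | succ r ih =>
    intro h2
    rw [Finset.sum_Icc_succ_top (by omega)]
    rcases Nat.lt_or_ge k (r+1) with h | h
    · rw [ih (by omega), if_neg (by omega)]
      omega
    · have hk : k = r + 1 := by omega
      subst hk
      have : ∑ j ∈ Finset.Icc 1 r, (if j ≤ r+1 then 2 else 0)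
          = ∑ _j ∈ Finset.Icc 1 r, 2 := by
        apply Finset.sum_congr rfl
        intro j hj
        simp only [Finset.mem_Icc] at hj
        rw [if_pos (by omega)]
      rw [this, if_pos (by omega)]
      simp [Nat.card_Icc]
      omega

variable {r : ℕ} {t : ℕ → ℕ} (hmono : ∀ j ≤ r, t j < t (j + 1))
include hmono

lemma tmono : ∀ b, b ≤ r + 1 → ∀ a, a < b → t a < t b := by
  intro b
  induction b with
  | zero => omega
  | succ b ih =>
    intro hb a ha
    rcases Nat.lt_or_ge a b with h | h
    · exact lt_trans (ih (by omega) a h) (hmono b (by omega))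
    · have : a = b := by omega
      subst this
      exact hmono a (by omega)

lemma tmono_le : ∀ a b, a ≤ b → b ≤ r + 1 → t a ≤ t b := by
  intro a b hab hb
  rcases Nat.eq_or_lt_of_le hab with h | h
  · subst h; rfl
  · exact le_of_lt (tmono hmono b hb a h)

lemma lab_eq_t {k : ℕ} (h1 : 1 ≤ k) (h2 : k ≤ r) : lab t r (t k) = 2 * k - 1 := by
  rw [lab, ← aux1 k r h1 h2]
  apply Finset.sum_congr rfl
  intro j hj
  simp only [Finset.mem_Icc] at hj
  rcases lt_trichotomy j k with h | h | h
  · rw [if_pos h, if_pos (tmono hmono k (by omega) j h)]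
  · subst h
    simp
  · have hlt : t k < t j := tmono hmono j (by omega) k h
    rw [if_neg (by omega), if_neg (by omega), if_neg (by omega), if_neg (by omega)]

lemma lab_of_Ioo {k x : ℕ} (hk : k ≤ r) (h1 : t k < x) (h2 : x < t (k + 1)) :
    lab t r x = 2 * k := by
  rw [lab, ← aux2 k r hk]
  apply Finset.sum_congr rfl
  intro j hj
  simp only [Finset.mem_Icc] at hj
  rcases Nat.lt_or_ge k j with h | h
  · have : t (k+1) ≤ t j := tmono_le hmono (k+1) j h (by omega)
    rw [if_neg (by omega), if_neg (by omega), if_neg (by omega)]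
  · have : t j ≤ t k := tmono_le hmono j k h (by omega)
    rw [if_pos (by omega), if_pos (by omega)]

lemma loc {m x : ℕ} (ht0 : t 0 = 0) (htm : t (r + 1) = m) (hx : 0 < x) (hxm : x < m) :
    ∃ k ≤ r, t k ≤ x ∧ x < t (k + 1) := by
  set fg := Nat.findGreatest (fun j => t j ≤ x) r with hfg
  refine ⟨fg, Nat.findGreatest_le r, ?_, ?_⟩
  · exact Nat.findGreatest_spec (P := fun j => t j ≤ x) (Nat.zero_le r)
      (show t 0 ≤ x by rw [ht0]; omega)
  · rcases Nat.lt_or_ge fg r with h | h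
    · have hg := Nat.findGreatest_is_greatest (P := fun j => t j ≤ x) (n := r)
        (k := fg + 1) (by omega) (by omega)
      simp only [not_le] at hg
      exact hg
    · have : fg = r := le_antisymm (Nat.findGreatest_le r) h
      rw [this, htm]
      exact hxm

lemma lab_odd {m x : ℕ} (ht0 : t 0 = 0) (htm : t (r + 1) = m) (hx : 0 < x) (hxm : x < m)
    (h : Odd (lab t r x)) :
    1 ≤ (lab t r x + 1) / 2 ∧ (lab t r x + 1) / 2 ≤ r ∧ x = t ((lab t r x + 1) / 2) := by
  obtain ⟨k, hk, h1, h2⟩ := loc hmono ht0 htm hx hxm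
  rcases Nat.eq_or_lt_of_le h1 with he | hlt
  · have hk1 : 1 ≤ k := by
      rcases Nat.eq_zero_or_pos k with h' | h'
      · exfalso; rw [h', ht0] at he; omega
      · exact h'
    have : lab t r x = 2 * k - 1 := by rw [← he]; exact lab_eq_t hmono hk1 hk
    rw [this]
    refine ⟨by omega, by omega, ?_⟩
    rw [← he]
    congr 1
    omega
  · have : lab t r x = 2 * k := lab_of_Ioo hmono hk hlt h2
    rw [this] at h
    rw [Nat.odd_iff] at h
    omega

lemma lab_even {m x j : ℕ} (ht0 : t 0 = 0) (htm : t (r + 1) = m) (hx : 0 < x) (hxm : x < m)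
    (h : lab t r x = 2 * j) : t j < x ∧ x < t (j + 1) := by
  obtain ⟨k, hk, h1, h2⟩ := loc hmono ht0 htm hx hxm
  rcases Nat.eq_or_lt_of_le h1 with he | hlt
  · have hk1 : 1 ≤ k := by
      rcases Nat.eq_zero_or_pos k with h' | h'
      · exfalso; rw [h', ht0] at he; omega
      · exact h'
    have : lab t r x = 2 * k - 1 := by rw [← he]; exact lab_eq_t hmono hk1 hk
    omega
  · have hl : lab t r x = 2 * k := lab_of_Ioo hmono hk hlt h2
    have : k = j := by omega
    subst this
    exact ⟨hlt, h2⟩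

end Lab

section Maps

variable {d r : ℕ}

/-- Classification map: sends `u` to the labelling of its values. -/
noncomputable def labMap (t : ℕ → ℕ) (r : ℕ) {d : ℕ}
    (u : ↥(Finset.univ : Finset (Fin d)) → ℕ) (i : Fin d) : Fin (2 * r + 1) :=
  ⟨lab t r (u ⟨i, Finset.mem_univ i⟩),
    by have := lab_le t r (u ⟨i, Finset.mem_univ i⟩); omega⟩

/-- Restriction of `u` to the fibers of `φ` over interval labels. -/
def fwdMap (φ : Fin d → Fin (2 * r + 1))
    (u : ↥(Finset.univ : Finset (Fin d)) → ℕ) (j : ℕ) (_ : j ∈ Finset.range (r + 1))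
    (i : ↥(Finset.filter (fun i => (φ i : ℕ) = 2 * j) Finset.univ)) : ℕ :=
  u ⟨i.1, Finset.mem_univ i.1⟩

/-- Gluing of a family of maps on the fibers of `φ`. -/
noncomputable def bwdMap (t : ℕ → ℕ) (φ : Fin d → Fin (2 * r + 1))
    (p : ∀ j ∈ Finset.range (r + 1),
      (↥(Finset.filter (fun i => (φ i : ℕ) = 2 * j) Finset.univ) → ℕ))
    (i : ↥(Finset.univ : Finset (Fin d))) : ℕ :=
  if h : Odd ((φ i.1 : ℕ)) then t (((φ i.1 : ℕ) + 1) / 2)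
  else p ((φ i.1 : ℕ) / 2) (Finset.mem_range.mpr (by have := (φ i.1).isLt; omega))
    ⟨i.1, by
      simp only [Finset.mem_filter]
      exact ⟨Finset.mem_univ _, by rw [Nat.not_odd_iff] at h; omega⟩⟩

lemma piCongr' {φ : Fin d → Fin (2 * r + 1)}
    (p : ∀ j ∈ Finset.range (r + 1),
      (↥(Finset.filter (fun i => (φ i : ℕ) = 2 * j) Finset.univ) → ℕ))
    {a b : ℕ} (hab : a = b) (ha : a ∈ Finset.range (r + 1)) (hb : b ∈ Finset.range (r + 1))
    (x : ↥(Finset.filter (fun i => (φ i : ℕ) = 2 * a) Finset.univ))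
    (y : ↥(Finset.filter (fun i => (φ i : ℕ) = 2 * b) Finset.univ))
    (hxy : (x : Fin d) = y) : p a ha x = p b hb y := by
  subst hab
  rw [Subtype.ext hxy]

lemma bwdMap_even {t : ℕ → ℕ} {φ : Fin d → Fin (2 * r + 1)}
    (p : ∀ j ∈ Finset.range (r + 1),
      (↥(Finset.filter (fun i => (φ i : ℕ) = 2 * j) Finset.univ) → ℕ))
    (i : ↥(Finset.univ : Finset (Fin d))) (j : ℕ) (hj : j ∈ Finset.range (r + 1))
    (hij : (φ i.1 : ℕ) = 2 * j)
    (hiS : i.1 ∈ Finset.filter (fun i => (φ i : ℕ) = 2 * j) Finset.univ) :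
    bwdMap t φ p i = p j hj ⟨i.1, hiS⟩ := by
  rw [bwdMap, dif_neg (by rw [Nat.not_odd_iff]; omega)]
  exact piCongr' p (by omega) _ hj _ _ rfl

end Maps

open Finset in
lemma fiber_eq {R : Type*} [CommRing R] {d : ℕ} (g : Fin d → ℕ → R)
    (m r : ℕ) (t : ℕ → ℕ) (ht0 : t 0 = 0) (htm : t (r + 1) = m)
    (hmono : ∀ j ≤ r, t j < t (j + 1))
    (φ : Fin d → Fin (2 * r + 1)) (hφm : Monotone φ)
    (hφo : ∀ v : Fin (2 * r + 1), Odd (v : ℕ) →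
      (Finset.filter (fun i => φ i = v) Finset.univ).card ≤ 1) :
    ∑ u ∈ Finset.filter
        (fun u : ↥(Finset.univ : Finset (Fin d)) → ℕ =>
          StrictMono u ∧ ∀ i : Fin d, lab t r (u ⟨i, Finset.mem_univ i⟩) = (φ i : ℕ))
        (Fintype.piFinset fun _ => Finset.Ioo 0 m),
      ∏ i : ↥(Finset.univ : Finset (Fin d)), g i.1 (u i) =
    (∏ i ∈ Finset.filter (fun i => Odd ((φ i : ℕ))) Finset.univ,
        g i (t (((φ i : ℕ) + 1) / 2))) *
      ∏ j ∈ Finset.range (r + 1),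
        splitSum g (Finset.filter (fun i => (φ i : ℕ) = 2 * j) Finset.univ)
          (t j) (t (j + 1)) := by
  classical
  simp only [splitSum]
  rw [Finset.prod_sum, Finset.mul_sum]
  refine Finset.sum_nbij' (fwdMap φ) (bwdMap t φ) ?_ ?_ ?_ ?_ ?_
  -- hi : forward maps into the pi set
  · intro u hu
    simp only [Finset.mem_filter, Fintype.mem_piFinset, Finset.mem_Ioo] at hu
    obtain ⟨hmem, hsm, hlab⟩ := hu
    rw [Finset.mem_pi]
    intro j hj
    rw [Finset.mem_range] at hj
    refine Finset.mem_filter.mpr ⟨?_, ?_⟩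
    · rw [Fintype.mem_piFinset]
      intro i
      have hij : (φ i.1 : ℕ) = 2 * j := (Finset.mem_filter.mp i.2).2
      have := lab_even hmono ht0 htm (hmem ⟨i.1, Finset.mem_univ i.1⟩).1
        (hmem ⟨i.1, Finset.mem_univ i.1⟩).2 (by rw [hlab i.1]; exact hij)
      exact Finset.mem_Ioo.mpr this
    · intro a b hab
      exact hsm (Subtype.mk_lt_mk.mpr (Subtype.coe_lt_coe.mpr hab))
  -- hj : backward maps into the fiber
  · intro p hp
    rw [Finset.mem_pi] at hp
    have hpval : ∀ j (hj : j ∈ Finset.range (r + 1))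
        (i : ↥(Finset.filter (fun i => (φ i : ℕ) = 2 * j) Finset.univ)),
        t j < p j hj i ∧ p j hj i < t (j + 1) := by
      intro j hj i
      have h1 := (Finset.mem_filter.mp (hp j hj)).1
      rw [Fintype.mem_piFinset] at h1
      exact Finset.mem_Ioo.mp (h1 i)
    have hpsm : ∀ j (hj : j ∈ Finset.range (r + 1)), StrictMono (p j hj) :=
      fun j hj => (Finset.mem_filter.mp (hp j hj)).2
    have hbnd : ∀ i : ↥(Finset.univ : Finset (Fin d)),
        t ((φ i.1 : ℕ) / 2) < bwdMap t φ p i ∧ bwdMap t φ p i ≤ t ((φ i.1 : ℕ) / 2 + 1) ∧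
          (¬ Odd ((φ i.1 : ℕ)) → bwdMap t φ p i < t ((φ i.1 : ℕ) / 2 + 1)) ∧
          (Odd ((φ i.1 : ℕ)) → bwdMap t φ p i = t ((φ i.1 : ℕ) / 2 + 1)) := by
      intro i
      by_cases h : Odd ((φ i.1 : ℕ))
      · rw [bwdMap, dif_pos h]
        have hv := (φ i.1).isLt
        have h1 : ((φ i.1 : ℕ) + 1) / 2 = (φ i.1 : ℕ) / 2 + 1 := by
          rw [Nat.odd_iff] at h; omega
        rw [h1]
        have h2 : t ((φ i.1 : ℕ) / 2) < t ((φ i.1 : ℕ) / 2 + 1) :=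
          hmono _ (by rw [Nat.odd_iff] at h; omega)
        exact ⟨h2, le_refl _, fun hc => absurd h hc, fun _ => rfl⟩
      · rw [bwdMap, dif_neg h]
        have hjv : (φ i.1 : ℕ) / 2 ∈ Finset.range (r + 1) :=
          Finset.mem_range.mpr (by have := (φ i.1).isLt; omega)
        have him : i.1 ∈ Finset.filter
            (fun i' => (φ i' : ℕ) = 2 * ((φ i.1 : ℕ) / 2)) Finset.univ := by
          simp only [Finset.mem_filter]
          exact ⟨Finset.mem_univ _, by rw [Nat.not_odd_iff] at h; omega⟩
        have := hpval ((φ i.1 : ℕ) / 2) hjv ⟨i.1, him⟩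
        exact ⟨this.1, le_of_lt this.2, fun _ => this.2, fun hc => absurd hc h⟩
    have hvlt : ∀ i : Fin d, (φ i : ℕ) < 2 * r + 1 := fun i => (φ i).isLt
    refine Finset.mem_filter.mpr ⟨?_, ?_, ?_⟩
    · rw [Fintype.mem_piFinset]
      intro i
      rw [Finset.mem_Ioo]
      obtain ⟨hl, hu, hstr, hoeq⟩ := hbnd i
      have h0 : t 0 ≤ t ((φ i.1 : ℕ) / 2) :=
        tmono_le hmono 0 _ (Nat.zero_le _) (by have := hvlt i.1; omega)
      refine ⟨by omega, ?_⟩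
      by_cases h : Odd ((φ i.1 : ℕ))
      · have h2 : t ((φ i.1 : ℕ) / 2 + 1) < t (r + 1) :=
          tmono hmono (r + 1) (le_refl _) _
            (by have := hvlt i.1; rw [Nat.odd_iff] at h; omega)
        have h3 := hoeq h
        omega
      · have h1 : t ((φ i.1 : ℕ) / 2 + 1) ≤ t (r + 1) :=
          tmono_le hmono _ _ (by have := hvlt i.1; omega) (le_refl _)
        have h3 := hstr h
        omega
    · -- StrictMono of bwdMap
      intro a b hab
      have hab' : (a : Fin d) < b := Subtype.coe_lt_coe.mpr hab
      have hφab : (φ a.1 : ℕ) ≤ (φ b.1 : ℕ) := hφm (le_of_lt hab')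
      rcases eq_or_lt_of_le hφab with he | hlt
      · have heq : φ a.1 = φ b.1 := Fin.ext he
        by_cases h : Odd ((φ a.1 : ℕ))
        · exfalso
          have hcard := hφo (φ a.1) h
          have hsub : ({a.1, b.1} : Finset (Fin d)) ⊆
              Finset.filter (fun i => φ i = φ a.1) Finset.univ := by
            intro x hx
            simp only [Finset.mem_insert, Finset.mem_singleton] at hx
            rcases hx with rfl | rfl
            · simp
            · simp [heq]
          have hne : a.1 ≠ b.1 := ne_of_lt hab'
          have h2 : 2 ≤ (Finset.filter (fun i => φ i = φ a.1) Finset.univ).card := by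
            calc 2 = ({a.1, b.1} : Finset (Fin d)).card := by
                  rw [Finset.card_insert_of_notMem (by simpa using hne),
                    Finset.card_singleton]
              _ ≤ _ := Finset.card_le_card hsub
          omega
        · set j := (φ a.1 : ℕ) / 2 with hj
          have hja : (φ a.1 : ℕ) = 2 * j := by rw [Nat.not_odd_iff] at h; omega
          have hjb : (φ b.1 : ℕ) = 2 * j := by omega
          have hjr : j ∈ Finset.range (r + 1) :=
            Finset.mem_range.mpr (by have := hvlt a.1; omega)
          have hmemA : a.1 ∈ Finset.filter (fun i => (φ i : ℕ) = 2 * j) Finset.univ := by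
            simp [hja]
          have hmemB : b.1 ∈ Finset.filter (fun i => (φ i : ℕ) = 2 * j) Finset.univ := by
            simp [hjb]
          rw [bwdMap_even p a j hjr hja hmemA, bwdMap_even p b j hjr hjb hmemB]
          exact hpsm j hjr (Subtype.mk_lt_mk.mpr hab')
      · obtain ⟨-, hu, -, -⟩ := hbnd a
        obtain ⟨hl, -, -, -⟩ := hbnd b
        rcases Nat.lt_or_ge ((φ a.1 : ℕ) / 2) ((φ b.1 : ℕ) / 2) with hdd | hdd
        · have : t ((φ a.1 : ℕ) / 2 + 1) ≤ t ((φ b.1 : ℕ) / 2) :=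
            tmono_le hmono _ _ (by omega) (by have := hvlt b.1; omega)
          omega
        · have hveq : (φ a.1 : ℕ) / 2 = (φ b.1 : ℕ) / 2 := by omega
          have hav : ¬ Odd ((φ a.1 : ℕ)) := by rw [Nat.not_odd_iff]; omega
          have hbv : Odd ((φ b.1 : ℕ)) := by rw [Nat.odd_iff]; omega
          have h1 := (hbnd a).2.2.1 hav
          have h2 := (hbnd b).2.2.2 hbv
          rw [hveq] at h1
          omega
    · -- labels are correct
      intro i
      by_cases h : Odd ((φ i : ℕ))
      · rw [show bwdMap t φ p ⟨i, Finset.mem_univ i⟩ = t (((φ i : ℕ) + 1) / 2) from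
          dif_pos h]
        have hv := hvlt i
        have h1 : 1 ≤ ((φ i : ℕ) + 1) / 2 ∧ ((φ i : ℕ) + 1) / 2 ≤ r := by
          rw [Nat.odd_iff] at h; omega
        rw [lab_eq_t hmono h1.1 h1.2]
        rw [Nat.odd_iff] at h
        omega
      · have hj : (φ i : ℕ) / 2 ∈ Finset.range (r + 1) :=
          Finset.mem_range.mpr (by have := hvlt i; omega)
        have hja : (φ i : ℕ) = 2 * ((φ i : ℕ) / 2) := by rw [Nat.not_odd_iff] at h; omega
        have hmemI : i ∈ Finset.filter
            (fun i' => (φ i' : ℕ) = 2 * ((φ i : ℕ) / 2)) Finset.univ := by simp [← hja]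
        rw [bwdMap_even p ⟨i, Finset.mem_univ i⟩ _ hj hja hmemI]
        have hpv := Finset.mem_Ioo.mp (by
          have h1 := (Finset.mem_filter.mp (hp _ hj)).1
          rw [Fintype.mem_piFinset] at h1
          exact h1 ⟨i, hmemI⟩)
        rw [lab_of_Ioo hmono (show (φ i : ℕ) / 2 ≤ r by have := hvlt i; omega) hpv.1 hpv.2]
        omega
  -- left inverse
  · intro u hu
    simp only [Finset.mem_filter, Fintype.mem_piFinset, Finset.mem_Ioo] at hu
    obtain ⟨hmem, hsm, hlab⟩ := hu
    funext i
    by_cases h : Odd ((φ i.1 : ℕ))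
    · rw [show bwdMap t φ (fwdMap φ u) i = t (((φ i.1 : ℕ) + 1) / 2) from dif_pos h]
      have hx := hmem ⟨i.1, Finset.mem_univ i.1⟩
      have hodd : Odd (lab t r (u ⟨i.1, Finset.mem_univ i.1⟩)) := by
        rw [hlab i.1]; exact h
      have := (lab_odd hmono ht0 htm hx.1 hx.2 hodd).2.2
      rw [hlab i.1] at this
      exact this.symm
    · rw [bwdMap, dif_neg h]
      rfl
  -- right inverse
  · intro p hp
    funext j hj i
    have hij : (φ i.1 : ℕ) = 2 * j := (Finset.mem_filter.mp i.2).2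
    show bwdMap t φ p ⟨i.1, Finset.mem_univ i.1⟩ = p j hj i
    rw [bwdMap_even p ⟨i.1, Finset.mem_univ i.1⟩ j hj hij (by simp [hij])]
  -- summand equality
  · intro u hu
    simp only [Finset.mem_filter, Fintype.mem_piFinset, Finset.mem_Ioo] at hu
    obtain ⟨hmem, hsm, hlab⟩ := hu
    have h1 : ∏ i : ↥(Finset.univ : Finset (Fin d)), g i.1 (u i)
        = ∏ i ∈ (Finset.univ : Finset (Fin d)), g i (u ⟨i, Finset.mem_univ i⟩) :=
      Finset.prod_coe_sort Finset.univ (fun i => g i (u ⟨i, Finset.mem_univ i⟩))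
    rw [h1, ← Finset.prod_filter_mul_prod_filter_not Finset.univ (fun i => Odd ((φ i : ℕ)))]
    congr 1
    · apply Finset.prod_congr rfl
      intro i hi
      simp only [Finset.mem_filter] at hi
      have hx := hmem ⟨i, Finset.mem_univ i⟩
      have hodd : Odd (lab t r (u ⟨i, Finset.mem_univ i⟩)) := by
        rw [hlab i]; exact hi.2
      have := (lab_odd hmono ht0 htm hx.1 hx.2 hodd).2.2
      rw [hlab i] at this
      rw [← this]
    · have hrange : ∀ i ∈ Finset.filter (fun i => ¬ Odd ((φ i : ℕ))) Finset.univ,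
          (φ i : ℕ) / 2 ∈ Finset.range (r + 1) :=
        fun i _ => Finset.mem_range.mpr (by have := (φ i).isLt; omega)
      rw [← Finset.prod_fiberwise_of_maps_to hrange
        (fun i => g i (u ⟨i, Finset.mem_univ i⟩))]
      rw [← Finset.prod_attach (Finset.range (r + 1))]
      apply Finset.prod_congr rfl
      intro x _
      have hSeq : (Finset.filter (fun i => ¬ Odd ((φ i : ℕ))) Finset.univ).filter
          (fun i => (φ i : ℕ) / 2 = x.1) =
          Finset.filter (fun i => (φ i : ℕ) = 2 * x.1) Finset.univ := by
        ext i
        simp only [Finset.mem_filter, Finset.mem_univ, true_and, Nat.not_odd_iff]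
        omega
      rw [hSeq]
      exact (Finset.prod_coe_sort _ _).symm

/-- Formula of splitting of multiple harmonic sums (Lemma `splitting` of §6.1).
Given intermediate points `0 = t₀ < t₁ < ⋯ < t_r < t_{r+1} = m`, encode the totally
ordered set of labels `I₀ < P₁ < I₁ < ⋯ < P_r < I_r` as `Fin (2r+1)`, with even index
`2j ↔ I_j` and odd index `2j−1 ↔ P_j`.  Then
`Σ_{0<m₁<⋯<m_d<m} ∏_i g_i(m_i)` equals the sum, over all weakly increasing maps
`φ : {1,…,d} → {I₀,P₁,…,P_r,I_r}` taking each point label at most once, of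
`(∏_{φ(i) = P_j} g_i(t_j)) · ∏_{j=0}^{r} Σ_{t_j<u₁<⋯<u_{k_j}<t_{j+1}} ∏_s g_{i_{j,s}}(u_s)`,
where `i_{j,1} < ⋯ < i_{j,k_j}` enumerate `φ⁻¹(I_j)`. -/
theorem stmt_9 (R : Type*) [CommRing R] (d : ℕ) (hd : 1 ≤ d) (g : Fin d → ℕ → R)
    (m : ℕ) (hm : 1 ≤ m) (r : ℕ) (t : ℕ → ℕ)
    (ht0 : t 0 = 0) (htm : t (r + 1) = m) (hmono : ∀ j ≤ r, t j < t (j + 1)) :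
    splitSum g Finset.univ 0 m =
      ∑ φ ∈ Finset.filter (fun φ : Fin d → Fin (2 * r + 1) =>
            Monotone φ ∧ ∀ v : Fin (2 * r + 1), Odd (v : ℕ) →
              (Finset.filter (fun i => φ i = v) Finset.univ).card ≤ 1)
          Finset.univ,
        (∏ i ∈ Finset.filter (fun i => Odd ((φ i : ℕ))) Finset.univ,
            g i (t (((φ i : ℕ) + 1) / 2))) *
          ∏ j ∈ Finset.range (r + 1),
            splitSum g (Finset.filter (fun i => (φ i : ℕ) = 2 * j) Finset.univ)
              (t j) (t (j + 1)) := by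
  classical
  rw [show splitSum g Finset.univ 0 m =
      ∑ u ∈ Finset.filter (fun u : ↥(Finset.univ : Finset (Fin d)) → ℕ => StrictMono u)
          (Fintype.piFinset fun _ => Finset.Ioo 0 m),
        ∏ i : ↥(Finset.univ : Finset (Fin d)), g i.1 (u i) from rfl]
  have hmaps : ∀ u ∈ Finset.filter
        (fun u : ↥(Finset.univ : Finset (Fin d)) → ℕ => StrictMono u)
        (Fintype.piFinset fun _ => Finset.Ioo 0 m),
      labMap t r u ∈ Finset.filter (fun φ : Fin d → Fin (2 * r + 1) =>
          Monotone φ ∧ ∀ v : Fin (2 * r + 1), Odd (v : ℕ) →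
            (Finset.filter (fun i => φ i = v) Finset.univ).card ≤ 1)
        Finset.univ := by
    intro u hu
    rw [Finset.mem_filter] at hu
    obtain ⟨humem, husm⟩ := hu
    rw [Fintype.mem_piFinset] at humem
    refine Finset.mem_filter.mpr ⟨Finset.mem_univ _, ?_, ?_⟩
    · intro a b hab
      rcases eq_or_lt_of_le hab with rfl | h
      · exact le_refl _
      · have h1 : u ⟨a, Finset.mem_univ a⟩ ≤ u ⟨b, Finset.mem_univ b⟩ :=
          le_of_lt (husm (Subtype.mk_lt_mk.mpr h))
        exact Fin.mk_le_mk.mpr (lab_mono t r h1)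
    · intro v hv
      rw [Finset.card_le_one]
      intro a ha b hb
      simp only [Finset.mem_filter] at ha hb
      have hva : lab t r (u ⟨a, Finset.mem_univ a⟩) = (v : ℕ) :=
        congrArg Fin.val ha.2
      have hvb : lab t r (u ⟨b, Finset.mem_univ b⟩) = (v : ℕ) :=
        congrArg Fin.val hb.2
      have hxa := Finset.mem_Ioo.mp (humem ⟨a, Finset.mem_univ a⟩)
      have hxb := Finset.mem_Ioo.mp (humem ⟨b, Finset.mem_univ b⟩)
      have ha2 := (lab_odd hmono ht0 htm hxa.1 hxa.2 (by rw [hva]; exact hv)).2.2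
      have hb2 := (lab_odd hmono ht0 htm hxb.1 hxb.2 (by rw [hvb]; exact hv)).2.2
      rw [hva] at ha2
      rw [hvb] at hb2
      have : u ⟨a, Finset.mem_univ a⟩ = u ⟨b, Finset.mem_univ b⟩ := by
        rw [ha2, hb2]
      have := husm.injective this
      exact congrArg Subtype.val this
  refine Eq.trans (Finset.sum_fiberwise_of_maps_to hmaps _).symm ?_
  apply Finset.sum_congr rfl
  intro φ hφ
  rw [Finset.mem_filter] at hφ
  obtain ⟨-, hφm, hφo⟩ := hφ
  rw [Finset.filter_filter]
  rw [show Finset.filter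
        (fun u : ↥(Finset.univ : Finset (Fin d)) → ℕ => StrictMono u ∧ labMap t r u = φ)
        (Fintype.piFinset fun _ => Finset.Ioo 0 m)
      = Finset.filter
        (fun u : ↥(Finset.univ : Finset (Fin d)) → ℕ =>
          StrictMono u ∧ ∀ i : Fin d, lab t r (u ⟨i, Finset.mem_univ i⟩) = (φ i : ℕ))
        (Fintype.piFinset fun _ => Finset.Ioo 0 m) from
    Finset.filter_congr fun u _ => by
      constructor
      · rintro ⟨h1, h2⟩
        exact ⟨h1, fun i => by rw [← h2]; rfl⟩
      · rintro ⟨h1, h2⟩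
        exact ⟨h1, funext fun i => Fin.ext (h2 i)⟩]
  exact fiber_eq g m r t ht0 htm hmono φ hφm hφo
end
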